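/- Let n, m ∈ ℕ with 0 ≤ m ≤ n, and let t1, t2, t4, z ∈ ℂ. Assume t1+t2, t1+t4, and t1+1−t4−m all lie outside {0, −1, …, −(n−1)}, and assume t2+t1, t2+1−t4, and t2+t4+m all lie outside {0, −1, …, −(n−m−1)} (so that both Wilson polynomials below are defined). Then the following partial factorization holds: (t1+t2)_{n−m} · W_n(z; t1, t2, 1−t4−m, t4) = (−1)^m · (t4+z)_m · (t4−z)_m · (t1+t2)_n · W_{n−m}(z; t2, t1, 1−t4, t4+m). In particular the degree-n Wilson polynomial (in x = −z²) factors as the product of ∏_{j=1}^{m} [x + (t4+j−1)²] and a Wilson polynomial of degree n−m. -/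

import Mathlib

open Finset

/-- Pochhammer symbol `(a)_k = a (a+1) ⋯ (a+k-1)`. -/
noncomputable def poch (a : ℂ) (k : ℕ) : ℂ := ∏ i ∈ Finset.range k, (a + i)

/-- The Wilson polynomial `W_n(z; t1,t2,t3,t4)` in the variable `z` (with `x = -z²`). -/
noncomputable def wilson (n : ℕ) (z t1 t2 t3 t4 : ℂ) : ℂ :=
  poch (t1 + t2) n * poch (t1 + t3) n * poch (t1 + t4) n *
    ∑ k ∈ Finset.range (n + 1),
      (poch (-(n : ℂ)) k * poch (t1 + t2 + t3 + t4 + (n : ℂ) - 1) k *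
        poch (t1 + z) k * poch (t1 - z) k) /
      ((k.factorial : ℂ) * poch (t1 + t2) k * poch (t1 + t3) k * poch (t1 + t4) k)

lemma poch_one' (a : ℂ) : poch a 1 = a := by simp [poch]

lemma poch_zero (a : ℂ) : poch a 0 = 1 := by simp [poch]

lemma poch_succ (a : ℂ) (k : ℕ) : poch a (k+1) = poch a k * (a + k) := by
  simp [poch, Finset.prod_range_succ]

lemma poch_succ' (a : ℂ) (k : ℕ) : poch a (k+1) = a * poch (a+1) k := by
  simp only [poch, Finset.prod_range_succ']
  rw [mul_comm]
  congr 1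
  · simp
  · apply Finset.prod_congr rfl; intro i _; push_cast; ring

lemma poch_add (a : ℂ) (j k : ℕ) : poch a (j+k) = poch a j * poch (a+j) k := by
  induction k with
  | zero => simp [poch_zero]
  | succ k ih => rw [← Nat.add_assoc, poch_succ, ih, poch_succ, mul_assoc]; push_cast; ring_nf

lemma poch_ne_zero (a : ℂ) (k : ℕ) (h : ∀ i : ℕ, i < k → a + i ≠ 0) : poch a k ≠ 0 := by
  rw [poch, Finset.prod_ne_zero_iff]
  intro i hi
  exact h i (Finset.mem_range.mp hi)

lemma poch_neg_nat (N R : ℕ) : poch (-(N:ℂ)) R = (-1)^R * (N.descFactorial R : ℂ) := by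
  induction R with
  | zero => simp [poch_zero]
  | succ R ih =>
    rw [poch_succ, ih, Nat.descFactorial_succ]
    rcases lt_trichotomy R N with h | h | h
    · have : ((N - R : ℕ) : ℂ) = (N : ℂ) - R := by
        push_cast [Nat.cast_sub h.le]; ring
      push_cast [this]; ring
    · subst h
      simp [pow_succ]
    · rw [Nat.descFactorial_eq_zero_iff_lt.2 h]
      simp

lemma poch_reflect (y : ℂ) (r : ℕ) : poch (1 - y - (r:ℂ)) r = (-1)^r * poch y r := by
  induction r with
  | zero => simp [poch_zero]
  | succ r ih =>
    rw [poch_succ' , poch_succ]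
    have h1 : (1 : ℂ) - y - (r+1 : ℕ) + 1 = 1 - y - r := by push_cast; ring
    have h2 : (1 : ℂ) - y - (r+1 : ℕ) = -(y + r) := by push_cast; ring
    rw [h1, h2, ih]
    ring

lemma poch_sub_one (x : ℂ) (r : ℕ) : poch (x-1) r = poch x r - r * poch x (r-1) := by
  cases r with
  | zero => simp [poch_zero]
  | succ r =>
    rw [poch_succ', poch_succ]
    have : x - 1 + 1 = x := by ring
    rw [this, Nat.add_sub_cancel]
    push_cast; ring

lemma poch_merge (x : ℂ) (j k n : ℕ) (hjk : j ≤ k) (hkn : k ≤ n) :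
    poch (x + j) (k - j) * poch (x + k) (n - k) = poch (x + j) (n - j) := by
  have h1 : n - j = (k - j) + (n - k) := by omega
  rw [h1, poch_add]
  congr 2
  have : ((k - j : ℕ) : ℂ) = (k : ℂ) - j := by push_cast [Nat.cast_sub hjk]; ring
  rw [this]; ring

lemma poch_shift_out (x : ℂ) (j k : ℕ) (h : j ≤ k) :
    (x + j) * poch (x + 1 + j) (k - j) = poch (x + j) (k - j) * (x + k) := by
  have h1 := poch_succ' (x+(j:ℂ)) (k-j)
  have h2 := poch_succ (x+(j:ℂ)) (k-j)
  have h3 : x + (j:ℂ) + 1 = x + 1 + j := by ring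
  have h4 : x + (j:ℂ) + ((k-j:ℕ):ℂ) = x + k := by rw [Nat.cast_sub h]; ring
  rw [h3] at h1; rw [h4] at h2; rw [← h1, h2]

lemma pascal_sum (k : ℕ) (f : ℕ → ℂ) :
    ∑ j ∈ range (k+2), ((k+1).choose j : ℂ) * f j
      = ∑ j ∈ range (k+1), (k.choose j : ℂ) * (f j + f (j+1)) := by
  rw [Finset.sum_range_succ' (fun j => ((k+1).choose j : ℂ) * f j) (k+1)]
  simp only [Nat.choose_succ_succ, Nat.choose_zero_right, Nat.cast_one, one_mul, Nat.cast_add,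
    add_mul]
  rw [Finset.sum_add_distrib]
  have e2 : (∑ j ∈ range (k+1), ((k).choose (j+1) : ℂ) * f (j+1)) + f 0
      = ∑ j ∈ range (k+1), ((k).choose j : ℂ) * f j := by
    have e2' := Finset.sum_range_succ' (fun j => ((k).choose j : ℂ) * f j) (k+1)
    rw [Finset.sum_range_succ (fun j => ((k).choose j : ℂ) * f j) (k+1),
      Nat.choose_succ_self] at e2'
    simp only [Nat.cast_zero, zero_mul, add_zero, Nat.choose_zero_right, Nat.cast_one,
      one_mul] at e2'
    exact e2'.symm
  rw [add_assoc, e2]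
  rw [Finset.sum_congr rfl (fun j _ => mul_add ((k.choose j : ℂ)) (f j) (f (j+1))),
    Finset.sum_add_distrib, add_comm]

theorem PS (k : ℕ) : ∀ (a b c : ℂ),
    ∑ j ∈ range (k+1), (k.choose j : ℂ) * poch a j * poch b j *
      poch (c+j) (k-j) * poch (c-a-b) (k-j)
    = poch (c-a) k * poch (c-b) k := by
  induction k using Nat.strong_induction_on with
  | _ k IH =>
  match k with
  | 0 => intro a b c; simp [poch_zero]
  | (k+1) =>
    intro a b c
    have hkk : k < k + 1 := Nat.lt_succ_self k
    have hk1 : k - 1 < k + 1 := by omega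
    -- Step A : Pascal
    have hA := pascal_sum k
      (fun j => poch a j * poch b j * poch (c+(j:ℂ)) (k+1-j) * poch (c-a-b) (k+1-j))
    have hA' : (∑ j ∈ range (k+1+1), ((k+1).choose j : ℂ) * poch a j * poch b j *
        poch (c+j) (k+1-j) * poch (c-a-b) (k+1-j))
        = ∑ j ∈ range (k+1), ((k).choose j : ℂ) *
          (poch a j * poch b j * poch (c+(j:ℂ)) (k+1-j) * poch (c-a-b) (k+1-j)
           + poch a (j+1) * poch b (j+1) * poch (c+((j+1:ℕ):ℂ)) (k+1-(j+1)) *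
             poch (c-a-b) (k+1-(j+1))) := by
      rw [← hA]
      exact Finset.sum_congr rfl (fun j _ => by ring)
    rw [hA']
    -- Step B : per-term simplification
    have hB : ∀ j ∈ range (k+1), ((k).choose j : ℂ) *
          (poch a j * poch b j * poch (c+(j:ℂ)) (k+1-j) * poch (c-a-b) (k+1-j)
           + poch a (j+1) * poch b (j+1) * poch (c+((j+1:ℕ):ℂ)) (k+1-(j+1)) *
             poch (c-a-b) (k+1-(j+1)))
        = ((k).choose j : ℂ) * poch a j * poch b j * poch (c+1+(j:ℂ)) (k-j) *
            poch (c-a-b) (k-j) * ((c-a)*(c-b) + (k:ℂ)*(c+(j:ℂ))) := by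
      intro j hj
      have hjk : j ≤ k := Nat.lt_succ_iff.mp (Finset.mem_range.mp hj)
      have e1 : k+1-j = (k-j)+1 := by omega
      have e2 : k+1-(j+1) = k-j := by omega
      rw [e1, e2, poch_succ' (c+(j:ℂ)) (k-j), poch_succ (c-a-b) (k-j),
        poch_succ a j, poch_succ b j]
      have e3 : c + (j:ℂ) + 1 = c + 1 + j := by ring
      have e4 : (c + ((j+1:ℕ):ℂ)) = c + 1 + j := by push_cast; ring
      have e5 : ((k-j:ℕ):ℂ) = (k:ℂ) - j := by rw [Nat.cast_sub hjk]
      rw [e3, e4, e5]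
      ring
    rw [Finset.sum_congr rfl hB]
    -- split the sum
    have hsplit : ∑ j ∈ range (k+1), ((k).choose j : ℂ) * poch a j * poch b j *
          poch (c+1+(j:ℂ)) (k-j) * poch (c-a-b) (k-j) * ((c-a)*(c-b) + (k:ℂ)*(c+(j:ℂ)))
        = (c-a)*(c-b) * (∑ j ∈ range (k+1), ((k).choose j : ℂ) * poch a j * poch b j *
            poch (c+1+(j:ℂ)) (k-j) * poch (c-a-b) (k-j))
          + (k:ℂ) * (∑ j ∈ range (k+1), ((k).choose j : ℂ) * poch a j * poch b j *
            poch (c+1+(j:ℂ)) (k-j) * poch (c-a-b) (k-j) * (c+(j:ℂ))) := by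
      rw [Finset.mul_sum, Finset.mul_sum, ← Finset.sum_add_distrib]
      exact Finset.sum_congr rfl (fun j _ => by ring)
    rw [hsplit]
    -- V : second sum
    have hV : (∑ j ∈ range (k+1), ((k).choose j : ℂ) * poch a j * poch b j *
            poch (c+1+(j:ℂ)) (k-j) * poch (c-a-b) (k-j) * (c+(j:ℂ)))
        = (c+(k:ℂ)) * (poch (c-a) k * poch (c-b) k) := by
      rw [← IH k hkk a b c, Finset.mul_sum]
      apply Finset.sum_congr rfl
      intro j hj
      have hjk : j ≤ k := Nat.lt_succ_iff.mp (Finset.mem_range.mp hj)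
      have := poch_shift_out c j k hjk
      calc ((k).choose j : ℂ) * poch a j * poch b j *
            poch (c+1+(j:ℂ)) (k-j) * poch (c-a-b) (k-j) * (c+(j:ℂ))
          = ((k).choose j : ℂ) * poch a j * poch b j *
            ((c + (j:ℂ)) * poch (c+1+(j:ℂ)) (k-j)) * poch (c-a-b) (k-j) := by ring
        _ = ((k).choose j : ℂ) * poch a j * poch b j *
            (poch (c+(j:ℂ)) (k-j) * (c + (k:ℂ))) * poch (c-a-b) (k-j) := by rw [this]
        _ = (c+(k:ℂ)) * (((k).choose j : ℂ) * poch a j * poch b j *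
            poch (c+(j:ℂ)) (k-j) * poch (c-a-b) (k-j)) := by ring
    rw [hV]
    -- U : first sum, decompose
    have hU : (∑ j ∈ range (k+1), ((k).choose j : ℂ) * poch a j * poch b j *
            poch (c+1+(j:ℂ)) (k-j) * poch (c-a-b) (k-j))
        = poch (c+1-a) k * poch (c+1-b) k
          - (k:ℂ) * (c+(k:ℂ)) * (poch (c+1-a) (k-1) * poch (c+1-b) (k-1)) := by
      have hdec : ∀ j ∈ range (k+1), ((k).choose j : ℂ) * poch a j * poch b j *
            poch (c+1+(j:ℂ)) (k-j) * poch (c-a-b) (k-j)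
          = ((k).choose j : ℂ) * poch a j * poch b j *
            poch (c+1+(j:ℂ)) (k-j) * poch (c+1-a-b) (k-j)
            - ((k).choose j : ℂ) * poch a j * poch b j *
            poch (c+1+(j:ℂ)) (k-j) * (((k-j:ℕ):ℂ) * poch (c+1-a-b) (k-j-1)) := by
        intro j hj
        have harg : c - a - b = (c+1-a-b) - 1 := by ring
        rw [harg, poch_sub_one (c+1-a-b) (k-j)]
        ring
      rw [Finset.sum_congr rfl hdec, Finset.sum_sub_distrib]
      have hT1 : (∑ j ∈ range (k+1), ((k).choose j : ℂ) * poch a j * poch b j *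
            poch (c+1+(j:ℂ)) (k-j) * poch (c+1-a-b) (k-j))
          = poch (c+1-a) k * poch (c+1-b) k := IH k hkk a b (c+1)
      rw [hT1]
      congr 1
      -- W = k (c+k) T(k-1) a b (c+1)
      cases k with
      | zero => simp
      | succ K =>
        rw [Finset.sum_range_succ]
        have hlast : ((K+1).choose (K+1) : ℂ) * poch a (K+1) * poch b (K+1) *
            poch (c+1+((K+1:ℕ):ℂ)) (K+1-(K+1)) * ((((K+1)-(K+1):ℕ):ℂ) *
              poch (c+1-a-b) (K+1-(K+1)-1)) = 0 := by
          simp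
        rw [hlast, add_zero]
        have hterm : ∀ j ∈ range (K+1), ((K+1).choose j : ℂ) * poch a j * poch b j *
            poch (c+1+(j:ℂ)) (K+1-j) * ((((K+1)-j:ℕ):ℂ) * poch (c+1-a-b) (K+1-j-1))
            = ((K+1):ℂ) * (c+((K+1:ℕ):ℂ)) * (((K).choose j : ℂ) * poch a j * poch b j *
              poch (c+1+(j:ℂ)) (K-j) * poch (c+1-a-b) (K-j)) := by
          intro j hj
          have hjK : j ≤ K := Nat.lt_succ_iff.mp (Finset.mem_range.mp hj)
          -- choose identity: (K+1-j) * (K+1).choose j = (K+1) * K.choose j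
          have hch : (K+1-j) * ((K+1).choose j) = (K+1) * (K.choose j) :=
            calc (K+1-j) * ((K+1).choose j) = (K+1).choose j * (K+1-j) := Nat.mul_comm _ _
              _ = (K+1).choose (j+1) * (j+1) := (Nat.choose_succ_right_eq (K+1) j).symm
              _ = (K+1) * (K.choose j) := (Nat.add_one_mul_choose_eq K j).symm
          have hchC : (((K+1)-j:ℕ):ℂ) * (((K+1).choose j:ℕ) : ℂ)
              = ((K+1):ℂ) * ((K.choose j : ℕ):ℂ) := by
            exact_mod_cast congrArg (fun t : ℕ => (t:ℂ)) hch
          -- poch split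
          have e1 : K+1-j = (K-j)+1 := by omega
          have hp : poch (c+1+(j:ℂ)) (K+1-j) = poch (c+1+(j:ℂ)) (K-j) * (c+((K+1:ℕ):ℂ)) := by
            rw [e1, poch_succ]
            congr 1
            rw [Nat.cast_sub hjK]
            push_cast; ring
          have e2 : K+1-j-1 = K-j := by omega
          rw [hp, e2]
          calc ((K+1).choose j : ℂ) * poch a j * poch b j *
              (poch (c+1+(j:ℂ)) (K-j) * (c+((K+1:ℕ):ℂ))) *
              ((((K+1)-j:ℕ):ℂ) * poch (c+1-a-b) (K-j))
              = ((((K+1)-j:ℕ):ℂ) * (((K+1).choose j:ℕ) : ℂ)) * poch a j * poch b j *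
                poch (c+1+(j:ℂ)) (K-j) * (c+((K+1:ℕ):ℂ)) * poch (c+1-a-b) (K-j) := by ring
            _ = (((K+1):ℂ) * ((K.choose j : ℕ):ℂ)) * poch a j * poch b j *
                poch (c+1+(j:ℂ)) (K-j) * (c+((K+1:ℕ):ℂ)) * poch (c+1-a-b) (K-j) := by
                rw [hchC]
            _ = ((K+1):ℂ) * (c+((K+1:ℕ):ℂ)) * (((K).choose j : ℂ) * poch a j * poch b j *
                poch (c+1+(j:ℂ)) (K-j) * poch (c+1-a-b) (K-j)) := by push_cast; ring
        rw [Finset.sum_congr rfl hterm, ← Finset.mul_sum]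
        have hT2 : (∑ j ∈ range (K+1), ((K).choose j : ℂ) * poch a j * poch b j *
              poch (c+1+(j:ℂ)) (K-j) * poch (c+1-a-b) (K-j))
            = poch (c+1-a) K * poch (c+1-b) K := IH K (by omega) a b (c+1)
        rw [hT2]
        have hKK : (K+1) - 1 = K := by omega
        rw [hKK]
        push_cast
        ring
    rw [hU]
    -- final assembly
    cases k with
    | zero =>
      simp only [poch_succ, poch_zero, Nat.zero_sub, Nat.cast_zero]
      push_cast
      ring
    | succ K =>
      have r1 : poch (c-a) (K+1+1) = (c-a) * poch (c+1-a) (K+1) := by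
        rw [poch_succ']; congr 1; ring
      have r2 : poch (c-b) (K+1+1) = (c-b) * poch (c+1-b) (K+1) := by
        rw [poch_succ']; congr 1; ring
      have r3 : poch (c-a) (K+1) = (c-a) * poch (c+1-a) K := by
        rw [poch_succ']; congr 1; ring
      have r4 : poch (c-b) (K+1) = (c-b) * poch (c+1-b) K := by
        rw [poch_succ']; congr 1; ring
      have r5 : (K+1) - 1 = K := by omega
      rw [r1, r2, r3, r4, r5]
      push_cast; ring

lemma PS_signed (N : ℕ) (A B C : ℂ) :
    ∑ i ∈ range (N+1), (-1:ℂ)^i * (N.choose i : ℂ) * poch A i * poch B i *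
      poch (C+i) (N-i) * poch (1+A+B-C-(N:ℂ)+i) (N-i)
    = (-1:ℂ)^N * (poch (C-A) N * poch (C-B) N) := by
  rw [← PS N A B C, Finset.mul_sum]
  apply Finset.sum_congr rfl
  intro i hi
  have hiN : i ≤ N := Nat.lt_succ_iff.mp (Finset.mem_range.mp hi)
  have hre : poch (1+A+B-C-(N:ℂ)+i) (N-i) = (-1:ℂ)^(N-i) * poch (C-A-B) (N-i) := by
    have harg : (1:ℂ) + A + B - C - N + i = 1 - (C-A-B) - ((N-i:ℕ):ℂ) := by
      rw [Nat.cast_sub hiN]; ring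
    rw [harg, poch_reflect]
  rw [hre]
  have hsgn : (-1:ℂ)^i * (-1:ℂ)^(N-i) = (-1:ℂ)^N := by
    rw [← pow_add]; congr 1; omega
  calc (-1:ℂ)^i * (N.choose i : ℂ) * poch A i * poch B i * poch (C+i) (N-i) *
        ((-1:ℂ)^(N-i) * poch (C-A-B) (N-i))
      = ((-1:ℂ)^i * (-1:ℂ)^(N-i)) * ((N.choose i : ℂ) * poch A i * poch B i *
          poch (C+i) (N-i) * poch (C-A-B) (N-i)) := by ring
    _ = (-1:ℂ)^N * ((N.choose i : ℂ) * poch A i * poch B i *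
          poch (C+i) (N-i) * poch (C-A-B) (N-i)) := by rw [hsgn]

lemma sum_triangle (n : ℕ) (f : ℕ → ℕ → ℂ) :
    ∑ k ∈ range (n+1), ∑ j ∈ range (k+1), f k j
      = ∑ j ∈ range (n+1), ∑ k ∈ Ico j (n+1), f k j := by
  simp only [Finset.range_eq_Ico]
  exact (Finset.sum_Ico_Ico_comm 0 (n+1) (fun j k => f k j)).symm

noncomputable def phi (n : ℕ) (z a b c d : ℂ) : ℂ :=
  ∑ k ∈ range (n+1), (-1:ℂ)^k * (n.choose k : ℂ) * poch (a+b+c+d+(n:ℂ)-1) k *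
    poch (a+z) k * poch (a-z) k * poch (a+b+(k:ℂ)) (n-k) * poch (a+c+(k:ℂ)) (n-k) *
    poch (a+d+(k:ℂ)) (n-k)

lemma transform (n : ℕ) (z a b c d : ℂ) :
    phi n z a b c d
      = (-1:ℂ)^n * ∑ j ∈ range (n+1), (n.choose j : ℂ) * poch (a+b+c+d+(n:ℂ)-1) j *
          poch (1-c-d-(n:ℂ)) (n-j) * poch (d+z) j * poch (d-z) j *
          poch (a+d+(j:ℂ)) (n-j) * poch (b+d+(j:ℂ)) (n-j) := by
  have hPSk : ∀ k : ℕ, poch (a+z) k * poch (a-z) k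
      = ∑ j ∈ range (k+1), (k.choose j : ℂ) * poch (d-z) j * poch (d+z) j *
          poch (a+d+(j:ℂ)) (k-j) * poch (a-d) (k-j) := by
    intro k
    have h := PS k (d-z) (d+z) (a+d)
    have e1 : a+d-(d-z) = a+z := by ring
    have e2 : a+d-(d+z) = a-z := by ring
    have e3 : a+d-(d-z)-(d+z) = a-d := by ring
    rw [e3, e1, e2] at h
    exact h.symm
  have step2 : phi n z a b c d = ∑ k ∈ range (n+1), ∑ j ∈ range (k+1),
      ((-1:ℂ)^k * (n.choose k : ℂ) * (k.choose j : ℂ) * poch (a+b+c+d+(n:ℂ)-1) k *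
        poch (d+z) j * poch (d-z) j * poch (a-d) (k-j) *
        poch (a+b+(k:ℂ)) (n-k) * poch (a+c+(k:ℂ)) (n-k) * poch (a+d+(j:ℂ)) (n-j)) := by
    unfold phi
    apply Finset.sum_congr rfl
    intro k hk
    have hkn : k ≤ n := Nat.lt_succ_iff.mp (Finset.mem_range.mp hk)
    have e : (-1:ℂ)^k * (n.choose k : ℂ) * poch (a+b+c+d+(n:ℂ)-1) k *
        poch (a+z) k * poch (a-z) k * poch (a+b+(k:ℂ)) (n-k) * poch (a+c+(k:ℂ)) (n-k) *
        poch (a+d+(k:ℂ)) (n-k)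
        = (poch (a+z) k * poch (a-z) k) *
          ((-1:ℂ)^k * (n.choose k : ℂ) * poch (a+b+c+d+(n:ℂ)-1) k *
            poch (a+b+(k:ℂ)) (n-k) * poch (a+c+(k:ℂ)) (n-k) * poch (a+d+(k:ℂ)) (n-k)) := by
      ring
    rw [e, hPSk k, Finset.sum_mul]
    apply Finset.sum_congr rfl
    intro j hj
    have hjk : j ≤ k := Nat.lt_succ_iff.mp (Finset.mem_range.mp hj)
    have hm := poch_merge (a+d) j k n hjk hkn
    calc ((k.choose j : ℂ) * poch (d-z) j * poch (d+z) j *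
          poch (a+d+(j:ℂ)) (k-j) * poch (a-d) (k-j)) *
          ((-1:ℂ)^k * (n.choose k : ℂ) * poch (a+b+c+d+(n:ℂ)-1) k *
            poch (a+b+(k:ℂ)) (n-k) * poch (a+c+(k:ℂ)) (n-k) * poch (a+d+(k:ℂ)) (n-k))
        = ((-1:ℂ)^k * (n.choose k : ℂ) * (k.choose j : ℂ) * poch (a+b+c+d+(n:ℂ)-1) k *
            poch (d+z) j * poch (d-z) j * poch (a-d) (k-j) *
            poch (a+b+(k:ℂ)) (n-k) * poch (a+c+(k:ℂ)) (n-k)) *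
            (poch (a+d+(j:ℂ)) (k-j) * poch (a+d+(k:ℂ)) (n-k)) := by ring
      _ = _ := by rw [hm]
  rw [step2, sum_triangle n (fun k j => (-1:ℂ)^k * (n.choose k : ℂ) * (k.choose j : ℂ) *
    poch (a+b+c+d+(n:ℂ)-1) k * poch (d+z) j * poch (d-z) j * poch (a-d) (k-j) *
    poch (a+b+(k:ℂ)) (n-k) * poch (a+c+(k:ℂ)) (n-k) * poch (a+d+(j:ℂ)) (n-j))]
  rw [Finset.mul_sum]
  apply Finset.sum_congr rfl
  intro j hj
  have hjn : j ≤ n := Nat.lt_succ_iff.mp (Finset.mem_range.mp hj)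
  rw [Finset.sum_Ico_eq_sum_range]
  have hrange : n+1-j = (n-j)+1 := by omega
  rw [hrange]
  have hterm : ∀ i ∈ range ((n-j)+1),
      ((-1:ℂ)^(j+i) * (n.choose (j+i) : ℂ) * ((j+i).choose j : ℂ) *
        poch (a+b+c+d+(n:ℂ)-1) (j+i) * poch (d+z) j * poch (d-z) j * poch (a-d) (j+i-j) *
        poch (a+b+((j+i:ℕ):ℂ)) (n-(j+i)) * poch (a+c+((j+i:ℕ):ℂ)) (n-(j+i)) *
        poch (a+d+(j:ℂ)) (n-j))
      = ((-1:ℂ)^j * (n.choose j : ℂ) * poch (a+b+c+d+(n:ℂ)-1) j * poch (d+z) j *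
          poch (d-z) j * poch (a+d+(j:ℂ)) (n-j)) *
        ((-1:ℂ)^i * ((n-j).choose i : ℂ) * poch (a+b+c+d+(n:ℂ)-1+(j:ℂ)) i *
          poch (a-d) i * poch ((a+b+(j:ℂ))+(i:ℂ)) ((n-j)-i) *
          poch (1+(a+b+c+d+(n:ℂ)-1+(j:ℂ))+(a-d)-(a+b+(j:ℂ))-((n-j:ℕ):ℂ)+(i:ℂ)) ((n-j)-i)) := by
    intro i hi
    have hin : i ≤ n-j := Nat.lt_succ_iff.mp (Finset.mem_range.mp hi)
    have hjin : j+i ≤ n := by omega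
    have e1 : j+i-j = i := by omega
    have e2 : n-(j+i) = (n-j)-i := by omega
    have e3 : (-1:ℂ)^(j+i) = (-1:ℂ)^j * (-1:ℂ)^i := by rw [pow_add]
    have e4 : (n.choose (j+i)) * ((j+i).choose j) = (n.choose j) * ((n-j).choose i) := by
      have := Nat.choose_mul (n := n) (Nat.le_add_right j i)
      rwa [e1] at this
    have e4C : ((n.choose (j+i)) : ℂ) * (((j+i).choose j) : ℂ)
        = ((n.choose j) : ℂ) * (((n-j).choose i) : ℂ) := by exact_mod_cast e4
    have e5 : poch (a+b+c+d+(n:ℂ)-1) (j+i)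
        = poch (a+b+c+d+(n:ℂ)-1) j * poch (a+b+c+d+(n:ℂ)-1+(j:ℂ)) i := poch_add _ j i
    have e6 : a+b+((j+i:ℕ):ℂ) = (a+b+(j:ℂ))+(i:ℂ) := by push_cast; ring
    have e7 : a+c+((j+i:ℕ):ℂ)
        = 1+(a+b+c+d+(n:ℂ)-1+(j:ℂ))+(a-d)-(a+b+(j:ℂ))-((n-j:ℕ):ℂ)+(i:ℂ) := by
      rw [Nat.cast_sub hjn]; push_cast; ring
    rw [e1, e2, e3, e5, e6, e7]
    calc ((-1:ℂ)^j * (-1:ℂ)^i) * (n.choose (j+i) : ℂ) * ((j+i).choose j : ℂ) *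
          (poch (a+b+c+d+(n:ℂ)-1) j * poch (a+b+c+d+(n:ℂ)-1+(j:ℂ)) i) * poch (d+z) j *
          poch (d-z) j * poch (a-d) i *
          poch ((a+b+(j:ℂ))+(i:ℂ)) ((n-j)-i) *
          poch (1+(a+b+c+d+(n:ℂ)-1+(j:ℂ))+(a-d)-(a+b+(j:ℂ))-((n-j:ℕ):ℂ)+(i:ℂ)) ((n-j)-i) *
          poch (a+d+(j:ℂ)) (n-j)
        = ((n.choose (j+i)) : ℂ) * (((j+i).choose j) : ℂ) *
          ((-1:ℂ)^j * (-1:ℂ)^i * (poch (a+b+c+d+(n:ℂ)-1) j * poch (a+b+c+d+(n:ℂ)-1+(j:ℂ)) i) *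
          poch (d+z) j * poch (d-z) j * poch (a-d) i * poch ((a+b+(j:ℂ))+(i:ℂ)) ((n-j)-i) *
          poch (1+(a+b+c+d+(n:ℂ)-1+(j:ℂ))+(a-d)-(a+b+(j:ℂ))-((n-j:ℕ):ℂ)+(i:ℂ)) ((n-j)-i) *
          poch (a+d+(j:ℂ)) (n-j)) := by ring
      _ = (((n.choose j) : ℂ) * (((n-j).choose i) : ℂ)) *
          ((-1:ℂ)^j * (-1:ℂ)^i * (poch (a+b+c+d+(n:ℂ)-1) j * poch (a+b+c+d+(n:ℂ)-1+(j:ℂ)) i) *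
          poch (d+z) j * poch (d-z) j * poch (a-d) i * poch ((a+b+(j:ℂ))+(i:ℂ)) ((n-j)-i) *
          poch (1+(a+b+c+d+(n:ℂ)-1+(j:ℂ))+(a-d)-(a+b+(j:ℂ))-((n-j:ℕ):ℂ)+(i:ℂ)) ((n-j)-i) *
          poch (a+d+(j:ℂ)) (n-j)) := by rw [e4C]
      _ = _ := by ring
  rw [Finset.sum_congr rfl hterm, ← Finset.mul_sum]
  have hinner := PS_signed (n-j) (a+b+c+d+(n:ℂ)-1+(j:ℂ)) (a-d) (a+b+(j:ℂ))
  rw [hinner]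
  have f1 : (a+b+(j:ℂ)) - (a+b+c+d+(n:ℂ)-1+(j:ℂ)) = 1-c-d-(n:ℂ) := by ring
  have f2 : (a+b+(j:ℂ)) - (a-d) = b+d+(j:ℂ) := by ring
  rw [f1, f2]
  have hsgn : (-1:ℂ)^j * (-1:ℂ)^(n-j) = (-1:ℂ)^n := by
    rw [← pow_add]; congr 1; omega
  calc ((-1:ℂ)^j * (n.choose j : ℂ) * poch (a+b+c+d+(n:ℂ)-1) j * poch (d+z) j *
          poch (d-z) j * poch (a+d+(j:ℂ)) (n-j)) *
        ((-1:ℂ)^(n-j) * (poch (1-c-d-(n:ℂ)) (n-j) * poch (b+d+(j:ℂ)) (n-j)))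
      = ((-1:ℂ)^j * (-1:ℂ)^(n-j)) * ((n.choose j : ℂ) * poch (a+b+c+d+(n:ℂ)-1) j *
          poch (1-c-d-(n:ℂ)) (n-j) * poch (d+z) j * poch (d-z) j *
          poch (a+d+(j:ℂ)) (n-j) * poch (b+d+(j:ℂ)) (n-j)) := by ring
    _ = _ := by rw [hsgn]


lemma poch_split (x : ℂ) {k n : ℕ} (h : k ≤ n) :
    poch x n = poch x k * poch (x+(k:ℂ)) (n-k) := by
  have := poch_add x k (n-k)
  rw [Nat.add_sub_cancel' h] at this
  exact this

lemma wilson_eq_phi (n : ℕ) (z a b c d : ℂ)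
    (hb : ∀ k : ℕ, k < n → a + b + (k:ℂ) ≠ 0)
    (hc : ∀ k : ℕ, k < n → a + c + (k:ℂ) ≠ 0)
    (hd : ∀ k : ℕ, k < n → a + d + (k:ℂ) ≠ 0) :
    wilson n z a b c d = phi n z a b c d := by
  unfold wilson phi
  rw [Finset.mul_sum]
  apply Finset.sum_congr rfl
  intro k hk
  have hkn : k ≤ n := Nat.lt_succ_iff.mp (Finset.mem_range.mp hk)
  have hbk : poch (a+b) k ≠ 0 := poch_ne_zero _ _ (fun i hi => hb i (lt_of_lt_of_le hi hkn))
  have hck : poch (a+c) k ≠ 0 := poch_ne_zero _ _ (fun i hi => hc i (lt_of_lt_of_le hi hkn))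
  have hdk : poch (a+d) k ≠ 0 := poch_ne_zero _ _ (fun i hi => hd i (lt_of_lt_of_le hi hkn))
  have hfk : (k.factorial : ℂ) ≠ 0 := Nat.cast_ne_zero.mpr k.factorial_ne_zero
  have hD : (k.factorial : ℂ) * poch (a+b) k * poch (a+c) k * poch (a+d) k ≠ 0 :=
    mul_ne_zero (mul_ne_zero (mul_ne_zero hfk hbk) hck) hdk
  have hsb := poch_split (a+b) hkn
  have hsc := poch_split (a+c) hkn
  have hsd := poch_split (a+d) hkn
  have hneg : poch (-(n:ℂ)) k = (-1:ℂ)^k * ((k.factorial : ℂ) * (n.choose k : ℂ)) := by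
    rw [poch_neg_nat, Nat.descFactorial_eq_factorial_mul_choose]; push_cast; ring
  calc poch (a+b) n * poch (a+c) n * poch (a+d) n *
        ((poch (-(n:ℂ)) k * poch (a+b+c+d+(n:ℂ)-1) k * poch (a+z) k * poch (a-z) k) /
          ((k.factorial : ℂ) * poch (a+b) k * poch (a+c) k * poch (a+d) k))
      = (poch (a+b) n * poch (a+c) n * poch (a+d) n *
          (poch (-(n:ℂ)) k * poch (a+b+c+d+(n:ℂ)-1) k * poch (a+z) k * poch (a-z) k)) /
          ((k.factorial : ℂ) * poch (a+b) k * poch (a+c) k * poch (a+d) k) := by ring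
    _ = (-1:ℂ)^k * (n.choose k : ℂ) * poch (a+b+c+d+(n:ℂ)-1) k *
          poch (a+z) k * poch (a-z) k * poch (a+b+(k:ℂ)) (n-k) * poch (a+c+(k:ℂ)) (n-k) *
          poch (a+d+(k:ℂ)) (n-k) := by
        rw [div_eq_iff hD, hsb, hsc, hsd, hneg]; ring

lemma sum_shift_zero (n m : ℕ) (hmn : m ≤ n) (f : ℕ → ℂ)
    (h0 : ∀ j, j < m → f j = 0) :
    ∑ j ∈ range (n+1), f j = ∑ l ∈ range ((n-m)+1), f (m+l) := by
  have h1 : ∑ l ∈ range ((n-m)+1), f (m+l) = ∑ j ∈ Ico m (n+1), f j := by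
    rw [Finset.sum_Ico_eq_sum_range, show n+1-m = (n-m)+1 by omega]
  rw [h1]
  refine (Finset.sum_subset (fun x hx => ?_) (fun x hx hnx => ?_)).symm
  · simp only [Finset.mem_Ico, Finset.mem_range] at *; omega
  · refine h0 x ?_
    simp only [Finset.mem_Ico, Finset.mem_range] at *; omega

theorem wilson_partial_factorization (n m : ℕ) (hmn : m ≤ n) (t1 t2 t4 z : ℂ)
    (h12 : ∀ k : ℕ, k < n → t1 + t2 + k ≠ 0)
    (h14 : ∀ k : ℕ, k < n → t1 + t4 + k ≠ 0)
    (h13 : ∀ k : ℕ, k < n → t1 + 1 - t4 - (m : ℂ) + k ≠ 0)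
    (h21 : ∀ k : ℕ, k < n - m → t2 + t1 + k ≠ 0)
    (h23 : ∀ k : ℕ, k < n - m → t2 + 1 - t4 + k ≠ 0)
    (h24 : ∀ k : ℕ, k < n - m → t2 + t4 + (m : ℂ) + k ≠ 0) :
    poch (t1 + t2) (n - m) * wilson n z t1 t2 (1 - t4 - (m : ℂ)) t4
      = (-1 : ℂ) ^ m * poch (t4 + z) m * poch (t4 - z) m * poch (t1 + t2) n *
          wilson (n - m) z t2 t1 (1 - t4) (t4 + (m : ℂ)) := by
  have hL : wilson n z t1 t2 (1-t4-(m:ℂ)) t4 = phi n z t1 t2 (1-t4-(m:ℂ)) t4 :=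
    wilson_eq_phi n z t1 t2 (1-t4-(m:ℂ)) t4 h12
      (fun k hk => (show t1+1-t4-(m:ℂ)+k = t1+(1-t4-(m:ℂ))+k by ring) ▸ h13 k hk)
      h14
  have hR : wilson (n-m) z t2 t1 (1-t4) (t4+(m:ℂ)) = phi (n-m) z t2 t1 (1-t4) (t4+(m:ℂ)) :=
    wilson_eq_phi (n-m) z t2 t1 (1-t4) (t4+(m:ℂ)) h21
      (fun k hk => (show t2+1-t4+(k:ℂ) = t2+(1-t4)+k by ring) ▸ h23 k hk)
      (fun k hk => (show t2+t4+(m:ℂ)+k = t2+(t4+(m:ℂ))+k by ring) ▸ h24 k hk)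
  rw [hL, hR, transform n z t1 t2 (1-t4-(m:ℂ)) t4,
    transform (n-m) z t2 t1 (1-t4) (t4+(m:ℂ))]
  have h0 : ∀ j, j < m →
      ((n.choose j : ℂ) * poch (t1+t2+(1-t4-(m:ℂ))+t4+(n:ℂ)-1) j *
        poch (1-(1-t4-(m:ℂ))-t4-(n:ℂ)) (n-j) * poch (t4+z) j * poch (t4-z) j *
        poch (t1+t4+(j:ℂ)) (n-j) * poch (t2+t4+(j:ℂ)) (n-j)) = 0 := by
    intro j hj
    have harg : 1-(1-t4-(m:ℂ))-t4-(n:ℂ) = -(((n-m:ℕ)):ℂ) := by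
      rw [Nat.cast_sub hmn]; push_cast; ring
    rw [harg, poch_neg_nat, Nat.descFactorial_eq_zero_iff_lt.mpr (show n-m < n-j by omega)]
    simp
  rw [sum_shift_zero n m hmn
    (fun j => (n.choose j : ℂ) * poch (t1+t2+(1-t4-(m:ℂ))+t4+(n:ℂ)-1) j *
      poch (1-(1-t4-(m:ℂ))-t4-(n:ℂ)) (n-j) * poch (t4+z) j * poch (t4-z) j *
      poch (t1+t4+(j:ℂ)) (n-j) * poch (t2+t4+(j:ℂ)) (n-j)) h0]
  simp only [Finset.mul_sum]
  apply Finset.sum_congr rfl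
  intro l hl
  have hlnm : l ≤ n-m := Nat.lt_succ_iff.mp (Finset.mem_range.mp hl)
  have e0 : n-(m+l) = (n-m)-l := by omega
  have hmln : m+l ≤ n := by omega
  -- component identities
  have pZ1 : poch (t4+z) (m+l) = poch (t4+z) m * poch (t4+(m:ℂ)+z) l := by
    rw [poch_add, show t4+z+(m:ℂ) = t4+(m:ℂ)+z by ring]
  have pZ2 : poch (t4-z) (m+l) = poch (t4-z) m * poch (t4+(m:ℂ)-z) l := by
    rw [poch_add, show t4-z+(m:ℂ) = t4+(m:ℂ)-z by ring]
  have pT1 : t1+t4+((m+l:ℕ):ℂ) = t1+(t4+(m:ℂ))+(l:ℂ) := by push_cast; ring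
  have pT2 : t2+t4+((m+l:ℕ):ℂ) = t2+(t4+(m:ℂ))+(l:ℂ) := by push_cast; ring
  have pArgL : poch (1-(1-t4-(m:ℂ))-t4-(n:ℂ)) (n-(m+l))
      = (-1:ℂ)^((n-m)-l) * (((n-m).descFactorial ((n-m)-l) : ℕ) : ℂ) := by
    have harg : 1-(1-t4-(m:ℂ))-t4-(n:ℂ) = -(((n-m:ℕ)):ℂ) := by
      rw [Nat.cast_sub hmn]; push_cast; ring
    rw [harg, e0, poch_neg_nat]
  have pArgR : poch (1-(1-t4)-(t4+(m:ℂ))-((n-m:ℕ):ℂ)) ((n-m)-l)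
      = (-1:ℂ)^((n-m)-l) * ((n.descFactorial ((n-m)-l) : ℕ) : ℂ) := by
    have harg : 1-(1-t4)-(t4+(m:ℂ))-((n-m:ℕ):ℂ) = -((n:ℕ):ℂ) := by
      rw [Nat.cast_sub hmn]; push_cast; ring
    rw [harg, poch_neg_nat]
  have key : poch (t1+t2) (n-m) * poch (t1+t2+(1-t4-(m:ℂ))+t4+(n:ℂ)-1) (m+l)
      = poch (t1+t2) n * poch (t2+t1+(1-t4)+(t4+(m:ℂ))+((n-m:ℕ):ℂ)-1) l := by
    have c1 : t1+t2+(1-t4-(m:ℂ))+t4+(n:ℂ)-1 = t1+t2+((n-m:ℕ):ℂ) := by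
      rw [Nat.cast_sub hmn]; ring
    have c2 : t2+t1+(1-t4)+(t4+(m:ℂ))+((n-m:ℕ):ℂ)-1 = t1+t2+(n:ℂ) := by
      rw [Nat.cast_sub hmn]; ring
    rw [c1, c2]
    have h1 := poch_add (t1+t2) (n-m) (m+l)
    have h2 := poch_add (t1+t2) n l
    rw [show (n-m)+(m+l) = n+l by omega] at h1
    rw [← h1, h2]
  have hnat : n.choose (m+l) * (n-m).descFactorial ((n-m)-l)
      = (n-m).choose l * n.descFactorial ((n-m)-l) := by
    set R := (n-m)-l with hR
    have h1 : (n-m).descFactorial R * Nat.factorial l = Nat.factorial (n-m) := by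
      have h := Nat.factorial_mul_descFactorial (show R ≤ n-m by omega)
      rw [show (n-m)-R = l by omega] at h
      rw [Nat.mul_comm]; exact h
    have h2 : n.descFactorial R * Nat.factorial (m+l) = Nat.factorial n := by
      have h := Nat.factorial_mul_descFactorial (show R ≤ n by omega)
      rw [show n-R = m+l by omega] at h
      rw [Nat.mul_comm]; exact h
    have h3 : n.choose (m+l) * Nat.factorial (m+l) * Nat.factorial R = Nat.factorial n := by
      have h := Nat.choose_mul_factorial_mul_factorial hmln
      rw [show n-(m+l) = R by omega] at h
      exact h
    have h4 : (n-m).choose l * Nat.factorial l * Nat.factorial R = Nat.factorial (n-m) := by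
      have h := Nat.choose_mul_factorial_mul_factorial (show l ≤ n-m by omega)
      rw [show (n-m)-l = R from rfl] at h
      exact h
    have hpos : 0 < Nat.factorial l * (Nat.factorial (m+l) * Nat.factorial R) :=
      Nat.mul_pos (Nat.factorial_pos l) (Nat.mul_pos (Nat.factorial_pos (m+l)) (Nat.factorial_pos R))
    apply Nat.eq_of_mul_eq_mul_right hpos
    calc n.choose (m+l) * (n-m).descFactorial R *
          (Nat.factorial l * (Nat.factorial (m+l) * Nat.factorial R))
        = ((n-m).descFactorial R * Nat.factorial l) *
          (n.choose (m+l) * Nat.factorial (m+l) * Nat.factorial R) := by ring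
      _ = Nat.factorial (n-m) * Nat.factorial n := by rw [h1, h3]
      _ = (n.descFactorial R * Nat.factorial (m+l)) *
          ((n-m).choose l * Nat.factorial l * Nat.factorial R) := by rw [h2, h4]; ring
      _ = (n-m).choose l * n.descFactorial R *
          (Nat.factorial l * (Nat.factorial (m+l) * Nat.factorial R)) := by ring
  have hnatC : ((n.choose (m+l) : ℕ) : ℂ) * (((n-m).descFactorial ((n-m)-l) : ℕ) : ℂ)
      = (((n-m).choose l : ℕ) : ℂ) * ((n.descFactorial ((n-m)-l) : ℕ) : ℂ) := by
    exact_mod_cast hnat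
  have hsign : (-1:ℂ)^n = (-1:ℂ)^m * (-1:ℂ)^(n-m) := by
    rw [← pow_add, show m+(n-m) = n by omega]
  -- assemble
  calc poch (t1+t2) (n-m) * ((-1:ℂ)^n *
        ((n.choose (m+l) : ℂ) * poch (t1+t2+(1-t4-(m:ℂ))+t4+(n:ℂ)-1) (m+l) *
          poch (1-(1-t4-(m:ℂ))-t4-(n:ℂ)) (n-(m+l)) * poch (t4+z) (m+l) * poch (t4-z) (m+l) *
          poch (t1+t4+((m+l:ℕ):ℂ)) (n-(m+l)) * poch (t2+t4+((m+l:ℕ):ℂ)) (n-(m+l))))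
      = (poch (t1+t2) (n-m) * poch (t1+t2+(1-t4-(m:ℂ))+t4+(n:ℂ)-1) (m+l)) *
        ((n.choose (m+l) : ℂ) * (((n-m).descFactorial ((n-m)-l) : ℕ) : ℂ)) *
        ((-1:ℂ)^n * (-1:ℂ)^((n-m)-l) * poch (t4+z) m * poch (t4+(m:ℂ)+z) l *
          poch (t4-z) m * poch (t4+(m:ℂ)-z) l *
          poch (t1+(t4+(m:ℂ))+(l:ℂ)) ((n-m)-l) * poch (t2+(t4+(m:ℂ))+(l:ℂ)) ((n-m)-l)) := by
        rw [pZ1, pZ2, pArgL, e0, pT1, pT2]; ring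
    _ = (poch (t1+t2) n * poch (t2+t1+(1-t4)+(t4+(m:ℂ))+((n-m:ℕ):ℂ)-1) l) *
        ((((n-m).choose l : ℕ) : ℂ) * ((n.descFactorial ((n-m)-l) : ℕ) : ℂ)) *
        ((-1:ℂ)^n * (-1:ℂ)^((n-m)-l) * poch (t4+z) m * poch (t4+(m:ℂ)+z) l *
          poch (t4-z) m * poch (t4+(m:ℂ)-z) l *
          poch (t1+(t4+(m:ℂ))+(l:ℂ)) ((n-m)-l) * poch (t2+(t4+(m:ℂ))+(l:ℂ)) ((n-m)-l)) := by
        rw [key, hnatC]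
    _ = (-1:ℂ)^m * poch (t4+z) m * poch (t4-z) m * poch (t1+t2) n * ((-1:ℂ)^(n-m) *
        (((n-m).choose l : ℂ) * poch (t2+t1+(1-t4)+(t4+(m:ℂ))+((n-m:ℕ):ℂ)-1) l *
          poch (1-(1-t4)-(t4+(m:ℂ))-((n-m:ℕ):ℂ)) ((n-m)-l) *
          poch ((t4+(m:ℂ))+z) l * poch ((t4+(m:ℂ))-z) l *
          poch (t2+(t4+(m:ℂ))+(l:ℂ)) ((n-m)-l) * poch (t1+(t4+(m:ℂ))+(l:ℂ)) ((n-m)-l))) := by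
        rw [pArgR, hsign]; ring
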